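/- Let Ω ⊆ ℂ be open, S ⊆ Ω, and let A, B ⊆ S be measurable subsets of positive finite area. Then for every univalent map φ on Ω, area(φ(B)) ≤ M_S(A)·area(φ(A))·area(B). -/

import Mathlib

open Set MeasureTheory
open scoped ENNReal

noncomputable section

/-- A univalent map on `Ω`: injective and holomorphic. -/
def Univalent (φ : ℂ → ℂ) (Ω : Set ℂ) : Prop :=
  DifferentiableOn ℂ φ Ω ∧ Set.InjOn φ Ω

/-- The Koebe distortion constant
`C(z,w) = sup {|φ'(z)|/|φ'(w)| : φ univalent on Ω}` (valued in `ℝ≥0∞`). -/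
def Cdist (Ω : Set ℂ) (z w : ℂ) : ℝ≥0∞ :=
  ⨆ φ ∈ {φ : ℂ → ℂ | Univalent φ Ω}, ENNReal.ofReal (‖deriv φ z‖ / ‖deriv φ w‖)

/-- `g_A(z) = ∫_A C(z,w)⁻² dArea(w)`. -/
def gfun (Ω A : Set ℂ) (z : ℂ) : ℝ≥0∞ := ∫⁻ w in A, ((Cdist Ω z w)⁻¹) ^ 2

/-- `M_S(A) = 1 / inf {g_A(z) : z ∈ S}`. -/
def Mfun (Ω Sdom A : Set ℂ) : ℝ≥0∞ := (⨅ z ∈ Sdom, gfun Ω A z)⁻¹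

lemma det_cmul (c : ℂ) :
    ((c • (1 : ℂ →L[ℂ] ℂ)).restrictScalars ℝ).det = Complex.normSq c := by
  have h : ((c • (1 : ℂ →L[ℂ] ℂ)).restrictScalars ℝ).toLinearMap
      = Algebra.lmul ℝ ℂ c := by
    ext w
    simp [Algebra.lmul]
  rw [ContinuousLinearMap.det, h, ← Algebra.norm_apply, Algebra.norm_complex_apply]

lemma countable_of_isolated {Z : Set ℂ} (h : ∀ z ∈ Z, ∃ U ∈ nhds z, U ∩ Z ⊆ {z}) :
    Z.Countable := by
  have key : ∀ z ∈ Z, ∃ V ∈ TopologicalSpace.countableBasis ℂ, z ∈ V ∧ (V ∩ Z).Subsingleton := by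
    intro z hz
    obtain ⟨U, hU, hUZ⟩ := h z hz
    obtain ⟨V, hVb, hzV, hVU⟩ :=
      (TopologicalSpace.isBasis_countableBasis ℂ).mem_nhds_iff.1 hU
    exact ⟨V, hVb, hzV, fun x hx y hy => by
      have hx' := hUZ ⟨hVU hx.1, hx.2⟩
      have hy' := hUZ ⟨hVU hy.1, hy.2⟩
      simp only [mem_singleton_iff] at hx' hy'
      rw [hx', hy']⟩
  have hsub : Z ⊆ ⋃ V ∈ {V ∈ TopologicalSpace.countableBasis ℂ | (V ∩ Z).Subsingleton}, V ∩ Z := by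
    intro z hz
    obtain ⟨V, hVb, hzV, hsV⟩ := key z hz
    exact mem_biUnion ⟨hVb, hsV⟩ ⟨hzV, hz⟩
  refine Set.Countable.mono hsub ?_
  refine Set.Countable.biUnion ((TopologicalSpace.countable_countableBasis ℂ).mono
    (sep_subset _ _)) ?_
  intro V hV
  exact hV.2.countable

lemma image_measure_eq {Ω : Set ℂ} (hΩ : IsOpen Ω) {φ : ℂ → ℂ} (hφ : Univalent φ Ω)
    {s : Set ℂ} (hs : MeasurableSet s) (hsub : s ⊆ Ω) :
    volume (φ '' s) = ∫⁻ x in s, ENNReal.ofReal (‖deriv φ x‖ ^ 2) := by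
  have hder : ∀ x ∈ s, HasFDerivWithinAt φ
      (((deriv φ x) • (1 : ℂ →L[ℂ] ℂ)).restrictScalars ℝ) s x := by
    intro x hx
    have hd : DifferentiableAt ℂ φ x :=
      (hφ.1 x (hsub hx)).differentiableAt (hΩ.mem_nhds (hsub hx))
    have h1 : HasFDerivAt φ (ContinuousLinearMap.smulRight (1 : ℂ →L[ℂ] ℂ) (deriv φ x)) x :=
      hd.hasDerivAt
    have h2 : ContinuousLinearMap.smulRight (1 : ℂ →L[ℂ] ℂ) (deriv φ x)
        = (deriv φ x) • (1 : ℂ →L[ℂ] ℂ) := by ext w; simp [mul_comm]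
    rw [h2] at h1
    exact (h1.restrictScalars ℝ).hasFDerivWithinAt
  rw [← lintegral_abs_det_fderiv_eq_addHaar_image volume hs hder (hφ.2.mono hsub)]
  refine lintegral_congr fun x => ?_
  rw [det_cmul, abs_of_nonneg (Complex.normSq_nonneg _)]
  congr 1
  rw [Complex.normSq_eq_norm_sq]

lemma deriv_zero_null {Ω : Set ℂ} (hΩ : IsOpen Ω) {φ : ℂ → ℂ} (hφ : Univalent φ Ω) :
    volume {z | z ∈ Ω ∧ deriv φ z = 0} = 0 := by
  have han : AnalyticOnNhd ℂ (deriv φ) Ω := (hφ.1.analyticOnNhd hΩ).deriv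
  refine Set.Countable.measure_zero ?_ _
  refine countable_of_isolated fun z hz => ?_
  obtain ⟨hzΩ, hz0⟩ := hz
  rcases (han z hzΩ).eventually_eq_zero_or_eventually_ne_zero with h | h
  · -- deriv φ ≡ 0 near z : contradiction with injectivity
    exfalso
    have hball := (h.and (hΩ.mem_nhds hzΩ : Ω ∈ nhds z)).exists_mem
    obtain ⟨t, ht, htsub⟩ := hball
    obtain ⟨r, hr, hrt⟩ := Metric.mem_nhds_iff.1 ht
    -- φ is constant on ball z r
    have hdiff : DifferentiableOn ℂ φ (Metric.ball z r) :=
      fun x hx => ((hφ.1 x (htsub _ (hrt hx)).2).differentiableAt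
        (hΩ.mem_nhds (htsub _ (hrt hx)).2)).differentiableWithinAt
    have hconst : ∀ x ∈ Metric.ball z r, ∀ y ∈ Metric.ball z r, φ x = φ y := by
      intro x hx y hy
      refine (convex_ball z r).is_const_of_fderivWithin_eq_zero hdiff ?_ hx hy
      intro u hu
      rw [fderivWithin_of_isOpen Metric.isOpen_ball hu]
      have hd : DifferentiableAt ℂ φ u :=
        (hφ.1 u (htsub _ (hrt hu)).2).differentiableAt (hΩ.mem_nhds (htsub _ (hrt hu)).2)
      have h0 : deriv φ u = 0 := (htsub _ (hrt hu)).1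
      have h1 : HasFDerivAt φ (ContinuousLinearMap.smulRight (1 : ℂ →L[ℂ] ℂ) (deriv φ u)) u :=
        hd.hasDerivAt
      rw [h0] at h1
      rw [h1.fderiv]
      ext w
      simp
    have hne : z + (r / 2 : ℝ) ≠ z := by
      intro hcontra
      have : ((r / 2 : ℝ) : ℂ) = 0 := by linear_combination hcontra
      simp only [Complex.ofReal_eq_zero] at this
      linarith
    have hmem : z + (r / 2 : ℝ) ∈ Metric.ball z r := by
      simp [Metric.mem_ball, dist_eq_norm, abs_of_pos hr, abs_of_pos (half_pos hr)]
      linarith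
    have hmemz : z ∈ Metric.ball z r := Metric.mem_ball_self hr
    exact hne (hφ.2 (htsub _ (hrt hmem)).2 (htsub _ (hrt hmemz)).2 (hconst _ hmem _ hmemz))
  · -- isolated
    obtain ⟨t, ht, htsub⟩ := h.exists_mem
    obtain ⟨U, hUopen, hzU, hUsub⟩ := mem_nhdsWithin.1 ht
    refine ⟨U, hUopen.mem_nhds hzU, fun x hx => ?_⟩
    by_contra hxne
    simp only [mem_singleton_iff] at hxne
    exact htsub x (hUsub ⟨hx.1, hxne⟩) hx.2.2

/-- Abstract distortion estimate: for measurable `A, B ⊆ S ⊆ Ω` of positive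
finite area and any univalent `φ` on `Ω`,
`area(φ(B)) ≤ M_S(A)·area(φ(A))·area(B)`. -/
theorem area_image_le_of_univalent (Ω : Set ℂ) (hΩ : IsOpen Ω)
    (Sdom : Set ℂ) (hS : Sdom ⊆ Ω)
    (A B : Set ℂ) (hAmeas : MeasurableSet A) (hBmeas : MeasurableSet B)
    (hAsub : A ⊆ Sdom) (hBsub : B ⊆ Sdom)
    (hApos : 0 < volume A) (hAfin : volume A < ⊤)
    (hBpos : 0 < volume B) (hBfin : volume B < ⊤)
    (φ : ℂ → ℂ) (hφ : Univalent φ Ω) :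
    volume (φ '' B) ≤ Mfun Ω Sdom A * volume (φ '' A) * volume B := by

  have hid : Univalent id Ω := ⟨differentiable_id.differentiableOn, injOn_id _⟩
  have hC1 : ∀ z w : ℂ, 1 ≤ Cdist Ω z w := by
    intro z w
    have h := le_biSup
      (fun ψ : ℂ → ℂ => ENNReal.ofReal (‖deriv ψ z‖ / ‖deriv ψ w‖))
      (show id ∈ {ψ : ℂ → ℂ | Univalent ψ Ω} from hid)
    simpa [Cdist] using h
  have hCinv : ∀ z w : ℂ, ((Cdist Ω z w)⁻¹) ^ 2 ≤ 1 := fun z w =>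
    pow_le_one' (ENNReal.inv_le_one.2 (hC1 z w)) 2
  have hZ : volume {z | z ∈ Ω ∧ deriv φ z = 0} = 0 := deriv_zero_null hΩ hφ
  have hfm : Measurable fun x => ENNReal.ofReal (‖deriv φ x‖ ^ 2) :=
    (((measurable_deriv φ).norm).pow_const 2).ennreal_ofReal
  have himA := image_measure_eq hΩ hφ hAmeas (hAsub.trans hS)
  have himB := image_measure_eq hΩ hφ hBmeas (hBsub.trans hS)
  have hae : ∀ᵐ w : ℂ, ¬(w ∈ Ω ∧ deriv φ w = 0) := by
    rw [ae_iff]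
    simpa [not_not] using hZ
  -- positivity of volume (φ '' A)
  have hVpos : 0 < volume (φ '' A) := by
    rw [himA]
    rw [lintegral_pos_iff_support hfm]
    have hsupp : Function.support (fun x => ENNReal.ofReal (‖deriv φ x‖ ^ 2))
        = {x | deriv φ x ≠ 0} := by
      ext x
      simp only [Function.mem_support, ne_eq, ENNReal.ofReal_eq_zero, not_le, mem_setOf_eq]
      constructor
      · intro h h0
        rw [h0] at h
        simp at h
      · intro h
        have : (0:ℝ) < ‖deriv φ x‖ := norm_pos_iff.2 h
        positivity
    have hsm : MeasurableSet (Function.support fun x => ENNReal.ofReal (‖deriv φ x‖ ^ 2)) :=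
      measurableSet_support hfm
    rw [Measure.restrict_apply hsm]
    have hdiffnull : volume (A \ Function.support fun x => ENNReal.ofReal (‖deriv φ x‖ ^ 2)) = 0 := by
      refine measure_mono_null ?_ hZ
      intro x hx
      refine ⟨hS (hAsub hx.1), ?_⟩
      have := hx.2
      rw [hsupp] at this
      simpa using this
    have hsplit := measure_inter_add_diff (μ := volume) A hsm
    rw [inter_comm]
    rw [hdiffnull, add_zero] at hsplit
    rw [hsplit]
    exact hApos
  -- the infimum is finite
  obtain ⟨z₀, hz₀⟩ := nonempty_of_measure_ne_zero hApos.ne'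
  have hIfin : (⨅ z ∈ Sdom, gfun Ω A z) ≠ ⊤ := by
    refine ne_top_of_le_ne_top hAfin.ne ?_
    refine le_trans (iInf₂_le z₀ (hAsub hz₀)) ?_
    calc gfun Ω A z₀ ≤ ∫⁻ _ in A, 1 := lintegral_mono fun w => hCinv z₀ w
      _ = volume A := by simp
  -- key pointwise estimate
  have key1 : ∀ z ∈ Sdom,
      ENNReal.ofReal (‖deriv φ z‖ ^ 2) * gfun Ω A z ≤ volume (φ '' A) := by
    intro z hz
    rw [himA, gfun, ← lintegral_const_mul' _ _ ENNReal.ofReal_ne_top]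
    refine setLIntegral_mono_ae hfm.aemeasurable ?_
    filter_upwards [hae] with w hw hwA
    rcases eq_or_ne (deriv φ z) 0 with hz0 | hz0
    · simp [hz0]
    have hwΩ : w ∈ Ω := hS (hAsub hwA)
    have hw0 : deriv φ w ≠ 0 := fun h => hw ⟨hwΩ, h⟩
    have ha : (0:ℝ) < ‖deriv φ z‖ := norm_pos_iff.2 hz0
    have hb : (0:ℝ) < ‖deriv φ w‖ := norm_pos_iff.2 hw0
    have hC : ENNReal.ofReal (‖deriv φ z‖ / ‖deriv φ w‖) ≤ Cdist Ω z w :=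
      le_biSup (fun ψ : ℂ → ℂ => ENNReal.ofReal (‖deriv ψ z‖ / ‖deriv ψ w‖))
        (show φ ∈ {ψ : ℂ → ℂ | Univalent ψ Ω} from hφ)
    have hCi : (Cdist Ω z w)⁻¹ ≤ ENNReal.ofReal (‖deriv φ w‖ / ‖deriv φ z‖) := by
      refine le_trans (ENNReal.inv_le_inv' hC) ?_
      rw [← ENNReal.ofReal_inv_of_pos (div_pos ha hb), inv_div]
    calc ENNReal.ofReal (‖deriv φ z‖ ^ 2) * ((Cdist Ω z w)⁻¹) ^ 2
        ≤ ENNReal.ofReal (‖deriv φ z‖ ^ 2) * (ENNReal.ofReal (‖deriv φ w‖ / ‖deriv φ z‖)) ^ 2 :=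
          mul_le_mul_right (pow_le_pow_left' hCi 2) _
      _ = ENNReal.ofReal (‖deriv φ z‖ ^ 2 * (‖deriv φ w‖ / ‖deriv φ z‖) ^ 2) := by
          rw [← ENNReal.ofReal_pow (div_nonneg hb.le ha.le),
            ← ENNReal.ofReal_mul (sq_nonneg _)]
      _ = ENNReal.ofReal (‖deriv φ w‖ ^ 2) := by
          congr 1
          rw [div_pow, mul_comm, div_mul_cancel₀ _ (pow_ne_zero 2 ha.ne')]
  have key2 : ∀ z ∈ Sdom,
      ENNReal.ofReal (‖deriv φ z‖ ^ 2) ≤ Mfun Ω Sdom A * volume (φ '' A) := by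
    intro z hz
    have h1 : ENNReal.ofReal (‖deriv φ z‖ ^ 2) * (⨅ z ∈ Sdom, gfun Ω A z)
        ≤ volume (φ '' A) :=
      le_trans (mul_le_mul_right (iInf₂_le z hz) _) (key1 z hz)
    rcases eq_or_ne (⨅ z ∈ Sdom, gfun Ω A z) 0 with hI | hI
    · rw [Mfun, hI, ENNReal.inv_zero, ENNReal.top_mul hVpos.ne']
      exact le_top
    · have h2 := (ENNReal.le_div_iff_mul_le (Or.inl hI) (Or.inl hIfin)).2 h1
      rwa [ENNReal.div_eq_inv_mul] at h2
  rw [himB]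
  calc ∫⁻ x in B, ENNReal.ofReal (‖deriv φ x‖ ^ 2)
      ≤ ∫⁻ _ in B, Mfun Ω Sdom A * volume (φ '' A) :=
        setLIntegral_mono measurable_const fun x hx => key2 x (hBsub hx)
    _ = Mfun Ω Sdom A * volume (φ '' A) * volume B := by
        rw [setLIntegral_const]
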